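/- Every finitely generated graded monoid is pre-rational. That is, if M is a monoid generated by a finite set and there exists a gradation φ : M → ℕ satisfying φ(mn) = φ(m) + φ(n) for all m, n ∈ M and φ(m) = 0 only if m is the neutral element of M, then M is pre-rational. -/

import Mathlib

/-- A monoid `M` is *pre-rational* if for every finite alphabet `A`, every monoid
homomorphism `μ` from the free monoid `A*` to `M`, and every `m ∈ M`, the language
`μ⁻¹(m) ⊆ A*` is regular. -/
def IsPreRational (M : Type*) [Monoid M] : Prop :=
  ∀ (A : Type) (_ : Fintype A) (μ : FreeMonoid A →* M) (m : M),
    Language.IsRegular {w : List A | μ (FreeMonoid.ofList w) = m}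

private lemma phi_prod {M : Type*} [Monoid M] (φ : M → ℕ)
    (hmul : ∀ m n : M, φ (m * n) = φ m + φ n) (h1 : φ 1 = 0) :
    ∀ l : List M, φ l.prod = (l.map φ).sum := by
  intro l
  induction l with
  | nil => simpa using h1
  | cons a t ih => simp [hmul, ih]

private lemma prod_filter_ne_one {M : Type*} [Monoid M] [DecidableEq M] :
    ∀ l : List M, (l.filter (fun y => y ≠ 1)).prod = l.prod := by
  intro l
  induction l with
  | nil => rfl
  | cons a t ih =>
      simp only [ne_eq, decide_not] at ih ⊢
      by_cases ha : a = 1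
      · simp [List.filter_cons, ha, ih]
      · simp [List.filter_cons, ha, ih]

private lemma phi_ball_finite {M : Type*} [Monoid M] (hfg : Monoid.FG M)
    (φ : M → ℕ) (hmul : ∀ m n : M, φ (m * n) = φ m + φ n)
    (hzero : ∀ m : M, φ m = 0 → m = 1) (k : ℕ) :
    {n : M | φ n ≤ k}.Finite := by
  classical
  have h1 : φ 1 = 0 := by have := hmul 1 1; simp at this; omega
  obtain ⟨T, hT⟩ := hfg.fg_top
  have hsub : {n : M | φ n ≤ k} ⊆
      (fun l : List {x // x ∈ T} => (l.map Subtype.val).prod) ''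
        {l : List {x // x ∈ T} | l.length ≤ k} := by
    intro n hn
    have hmem : n ∈ Submonoid.closure (T : Set M) := by rw [hT]; trivial
    obtain ⟨l, hl, hlp⟩ := Submonoid.exists_list_of_mem_closure hmem
    set l' : List M := l.filter (fun y => y ≠ 1) with hl'
    have hl'mem : ∀ y ∈ l', y ∈ T := fun y hy => hl y (List.mem_of_mem_filter hy)
    have hl'prod : l'.prod = n := by rw [hl', prod_filter_ne_one, hlp]
    have hpos : ∀ i ∈ l'.map φ, 1 ≤ i := by
      intro i hi
      obtain ⟨y, hy, rfl⟩ := List.mem_map.mp hi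
      have hy1 : y ≠ 1 := by
        have := List.of_mem_filter hy
        simpa using this
      rcases Nat.eq_zero_or_pos (φ y) with h | h
      · exact absurd (hzero y h) hy1
      · exact h
    have hlen : l'.length ≤ k := by
      calc l'.length = (l'.map φ).length := by simp
        _ ≤ (l'.map φ).sum := List.length_le_sum_of_one_le _ hpos
        _ = φ l'.prod := (phi_prod φ hmul h1 l').symm
        _ = φ n := by rw [hl'prod]
        _ ≤ k := hn
    refine ⟨l'.attach.map (fun y => (⟨y.1, hl'mem y.1 y.2⟩ : {x // x ∈ T})), ?_, ?_⟩
    · simpa using hlen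
    · simp only [List.map_map]
      have : (l'.attach.map ((Subtype.val ∘ fun y =>
          (⟨y.1, hl'mem y.1 y.2⟩ : {x // x ∈ T})))) = l' := by
        simp [Function.comp]
      rw [this, hl'prod]
  exact Set.Finite.subset (Set.Finite.image _ (List.finite_length_le _ k)) hsub

/-- Every finitely generated graded monoid is pre-rational: if `M` is generated by a
finite set and carries a gradation `φ : M → ℕ` with `φ (m * n) = φ m + φ n` and such that
`φ m = 0` only if `m = 1`, then `M` is pre-rational. -/
theorem fg_graded_isPreRational (M : Type*) [Monoid M] (hfg : Monoid.FG M)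
    (φ : M → ℕ) (hmul : ∀ m n : M, φ (m * n) = φ m + φ n)
    (hzero : ∀ m : M, φ m = 0 → m = 1) :
    IsPreRational M := by
  classical
  intro A _ μ m
  set k := φ m with hk
  have h1 : φ 1 = 0 := by have := hmul 1 1; simp at this; omega
  have hfin : {n : M | φ n ≤ k}.Finite := phi_ball_finite hfg φ hmul hzero k
  haveI : Fintype {n : M // φ n ≤ k} := hfin.fintype
  have hnil : μ (FreeMonoid.ofList ([] : List A)) = 1 := map_one μ
  -- the DFA
  let D : DFA A (Option {n : M // φ n ≤ k}) :=
    { step := fun s a => s.bind (fun n =>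
        if h : φ (n.1 * μ (FreeMonoid.of a)) ≤ k then some ⟨_, h⟩ else none)
      start := some ⟨1, by simp [h1]⟩
      accept := {some ⟨m, le_refl k⟩} }
  have hnone : ∀ w : List A, D.evalFrom none w = none := by
    intro w
    induction w with
    | nil => rfl
    | cons a t ih => exact ih
  have heval : ∀ (w : List A) (n : M) (hn : φ n ≤ k),
      D.evalFrom (some ⟨n, hn⟩) w =
        if h : φ (n * μ (FreeMonoid.ofList w)) ≤ k
        then some ⟨n * μ (FreeMonoid.ofList w), h⟩ else none := by
    intro w
    induction w with
    | nil =>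
        intro n hn
        rw [hnil]
        simp [hn, DFA.evalFrom]
    | cons a t ih =>
        intro n hn
        have hsplit : μ (FreeMonoid.ofList (a :: t)) =
            μ (FreeMonoid.of a) * μ (FreeMonoid.ofList t) := by
          rw [← map_mul]; rfl
        have hstep : D.evalFrom (some ⟨n, hn⟩) (a :: t) =
            D.evalFrom (D.step (some ⟨n, hn⟩) a) t := rfl
        by_cases h : φ (n * μ (FreeMonoid.of a)) ≤ k
        · rw [hstep]
          have : D.step (some ⟨n, hn⟩) a = some ⟨n * μ (FreeMonoid.of a), h⟩ := by
            simp [D, h]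
          rw [this, ih]
          rw [hsplit, ← mul_assoc]
        · have hbig : ¬ φ (n * (μ (FreeMonoid.of a) * μ (FreeMonoid.ofList t))) ≤ k := by
            rw [← mul_assoc, hmul]
            omega
          rw [hstep]
          have : D.step (some ⟨n, hn⟩) a = none := by simp [D, h]
          rw [this, hnone, hsplit]
          simp [hbig]
  -- reindex to a `Type 0` state space
  let e : Option {n : M // φ n ≤ k} ≃ Fin (Fintype.card (Option {n : M // φ n ≤ k})) :=
    Fintype.equivFin _
  refine ⟨Fin (Fintype.card (Option {n : M // φ n ≤ k})), inferInstance,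
    DFA.reindex e D, ?_⟩
  rw [DFA.accepts_reindex]
  ext w
  rw [DFA.mem_accepts]
  show D.evalFrom D.start w ∈ D.accept ↔ _
  have hst : D.start = some ⟨1, by simp [h1]⟩ := rfl
  rw [hst, heval]
  constructor
  · intro hmem
    by_cases h : φ (1 * μ (FreeMonoid.ofList w)) ≤ k
    · simp only [h, dif_pos] at hmem
      have := hmem
      simp only [D, Set.mem_singleton_iff, Option.some.injEq, Subtype.mk.injEq] at this
      exact (by simpa using this : μ (FreeMonoid.ofList w) = m)
    · simp only [h, dif_neg] at hmem
      exact absurd hmem (by simp [D])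
  · intro hmem
    have hw : μ (FreeMonoid.ofList w) = m := hmem
    have h : φ (1 * μ (FreeMonoid.ofList w)) ≤ k := by
      rw [one_mul, hw]
    simp only [h, dif_pos]
    simp [D, one_mul, hw]
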